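/- Let p > 1 and let a, b be real numbers. Define φ_s(x) = sign(x)·|x|^s. Then (φ_{p-1}(a) - φ_{p-1}(b))·(a - b) ≥ (4(p-1)/p²)·(φ_{p/2}(a) - φ_{p/2}(b))². -/

import Mathlib

/-- `φ_s(x) = sign(x) · |x|^s`. -/
noncomputable def phi (s x : ℝ) : ℝ := Real.sign x * |x| ^ s

open Real Set

lemma phi_of_pos {s x : ℝ} (hx : 0 < x) : phi s x = x ^ s := by
  simp [phi, Real.sign_of_pos hx, abs_of_pos hx]

lemma phi_zero (s : ℝ) : phi s 0 = 0 := by simp [phi]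

lemma phi_of_nonneg {s x : ℝ} (hs : s ≠ 0) (hx : 0 ≤ x) : phi s x = x ^ s := by
  rcases hx.lt_or_eq with h | h
  · exact phi_of_pos h
  · rw [← h, phi_zero, Real.zero_rpow hs]

lemma phi_neg (s x : ℝ) : phi s (-x) = - phi s x := by
  simp [phi, Real.sign_neg]

lemma phi_comp_pos {u v x : ℝ} (hx : 0 < x) : phi u (phi v x) = phi (v * u) x := by
  rw [phi_of_pos hx, phi_of_pos (Real.rpow_pos_of_pos hx v), phi_of_pos hx,
    ← Real.rpow_mul hx.le]

lemma phi_comp (u v x : ℝ) : phi u (phi v x) = phi (v * u) x := by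
  rcases lt_trichotomy x 0 with h | rfl | h
  · have hx : 0 < -x := by linarith
    have h1 : phi v x = -phi v (-x) := by
      have := phi_neg v (-x); rw [neg_neg] at this; linarith
    have h2 : phi (v * u) x = -phi (v * u) (-x) := by
      have := phi_neg (v * u) (-x); rw [neg_neg] at this; linarith
    rw [h1, phi_neg, phi_comp_pos hx, h2]
  · rw [phi_zero, phi_zero, phi_zero]
  · exact phi_comp_pos h

lemma phi_one' (x : ℝ) : phi 1 x = x := by
  rcases lt_trichotomy x 0 with h | rfl | h
  · simp [phi, Real.sign_of_neg h, abs_of_neg h]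
  · simp [phi]
  · simp [phi, Real.sign_of_pos h, abs_of_pos h]

/-- Bernoulli-based helper inequality. -/
lemma bern {s t : ℝ} (hs0 : 0 < s) (hs1 : s ≤ 1) (ht : 0 < t) :
    (2 - s) * t ^ (-s) ≤ s * t ^ (s - 2) + 2 - 2 * s := by
  have h2s : 0 < 2 - s := by linarith
  have hupos : 0 < t ^ (s - 2) := Real.rpow_pos_of_pos ht _
  have key : (t ^ (s - 2)) ^ (s / (2 - s)) = t ^ (-s) := by
    rw [← Real.rpow_mul ht.le]
    congr 1
    field_simp
    ring
  have hb := rpow_one_add_le_one_add_mul_self (s := t ^ (s - 2) - 1) (p := s / (2 - s))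
    (by linarith) (by positivity) (by rw [div_le_one h2s]; linarith)
  rw [show (1 : ℝ) + (t ^ (s - 2) - 1) = t ^ (s - 2) by ring] at hb
  rw [← key]
  calc (2 - s) * (t ^ (s - 2)) ^ (s / (2 - s))
      ≤ (2 - s) * (1 + s / (2 - s) * (t ^ (s - 2) - 1)) :=
        mul_le_mul_of_nonneg_left hb h2s.le
    _ = s * t ^ (s - 2) + 2 - 2 * s := by field_simp; ring

lemma f2_nonneg {s t : ℝ} (hs0 : 0 < s) (hs2 : s < 2) (ht : 0 < t) :
    0 ≤ 2 * (s - 1) ^ 2 - s * (s - 1) * t ^ (s - 2) - (2 - s) * (1 - s) * t ^ (-s) := by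
  rcases le_total s 1 with h | h
  · have hb := bern hs0 h ht
    nlinarith [mul_nonneg (by linarith : (0:ℝ) ≤ 1 - s)
      (by linarith : (0:ℝ) ≤ s * t ^ (s - 2) + 2 - 2 * s - (2 - s) * t ^ (-s))]
  · have hb := bern (by linarith : (0:ℝ) < 2 - s) (by linarith : 2 - s ≤ 1) ht
    rw [show -(2 - s) = s - 2 by ring, show 2 - s - 2 = -s by ring,
      show (2 : ℝ) - (2 - s) = s by ring] at hb
    nlinarith [mul_nonneg (by linarith : (0:ℝ) ≤ s - 1)
      (by linarith : (0:ℝ) ≤ (2 - s) * t ^ (-s) + 2 - 2 * (2 - s) - s * t ^ (s - 2))]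

lemma lemG {s : ℝ} (hs0 : 0 < s) (hs2 : s < 2) {t : ℝ} (ht : 1 ≤ t) :
    s * (2 - s) * (t - 1) ^ 2 ≤ (t ^ s - 1) * (t ^ (2 - s) - 1) := by
  set f : ℝ → ℝ := fun x => (x ^ s - 1) * (x ^ (2 - s) - 1) - s * (2 - s) * (x - 1) ^ 2 with hf
  set f1 : ℝ → ℝ := fun x =>
    (s * x ^ (s - 1)) * (x ^ (2 - s) - 1) + (x ^ s - 1) * ((2 - s) * x ^ (1 - s))
      - s * (2 - s) * (2 * (x - 1)) with hf1
  have hd : ∀ x : ℝ, 0 < x → HasDerivAt f (f1 x) x := by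
    intro x hx
    have hA : HasDerivAt (fun x : ℝ => x ^ s - 1) (s * x ^ (s - 1)) x :=
      (Real.hasDerivAt_rpow_const (Or.inl hx.ne')).sub_const 1
    have hB : HasDerivAt (fun x : ℝ => x ^ (2 - s) - 1) ((2 - s) * x ^ (1 - s)) x := by
      have := (Real.hasDerivAt_rpow_const (x := x) (p := 2 - s) (Or.inl hx.ne')).sub_const 1
      rwa [show 2 - s - 1 = 1 - s by ring] at this
    have hq : HasDerivAt (fun x : ℝ => s * (2 - s) * (x - 1) ^ 2)
        (s * (2 - s) * (2 * (x - 1))) x := by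
      have h0 : HasDerivAt (fun x : ℝ => (x - 1) ^ 2) (2 * (x - 1)) x := by
        simpa using ((hasDerivAt_id x).sub_const 1).fun_pow 2
      exact h0.const_mul _
    exact (hA.mul hB).sub hq
  have hd1 : ∀ x : ℝ, 0 < x → HasDerivAt f1
      (2 * (s - 1) ^ 2 - s * (s - 1) * x ^ (s - 2) - (2 - s) * (1 - s) * x ^ (-s)) x := by
    intro x hx
    have d1 : HasDerivAt (fun x : ℝ => x ^ (s - 1)) ((s - 1) * x ^ (s - 2)) x := by
      have := Real.hasDerivAt_rpow_const (x := x) (p := s - 1) (Or.inl hx.ne')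
      rwa [show s - 1 - 1 = s - 2 by ring] at this
    have d2 : HasDerivAt (fun x : ℝ => x ^ (1 - s)) ((1 - s) * x ^ (-s)) x := by
      have := Real.hasDerivAt_rpow_const (x := x) (p := 1 - s) (Or.inl hx.ne')
      rwa [show 1 - s - 1 = -s by ring] at this
    have dS : HasDerivAt (fun x : ℝ => x ^ s) (s * x ^ (s - 1)) x :=
      Real.hasDerivAt_rpow_const (Or.inl hx.ne')
    have dT : HasDerivAt (fun x : ℝ => x ^ (2 - s)) ((2 - s) * x ^ (1 - s)) x := by
      have := Real.hasDerivAt_rpow_const (x := x) (p := 2 - s) (Or.inl hx.ne')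
      rwa [show 2 - s - 1 = 1 - s by ring] at this
    have h1 : HasDerivAt (fun x : ℝ => (s * x ^ (s - 1)) * (x ^ (2 - s) - 1))
        ((s * ((s - 1) * x ^ (s - 2))) * (x ^ (2 - s) - 1)
          + (s * x ^ (s - 1)) * ((2 - s) * x ^ (1 - s))) x :=
      (d1.const_mul s).mul (dT.sub_const 1)
    have h2 : HasDerivAt (fun x : ℝ => (x ^ s - 1) * ((2 - s) * x ^ (1 - s)))
        ((s * x ^ (s - 1)) * ((2 - s) * x ^ (1 - s))
          + (x ^ s - 1) * ((2 - s) * ((1 - s) * x ^ (-s)))) x :=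
      (dS.sub_const 1).mul (d2.const_mul (2 - s))
    have h3 : HasDerivAt (fun x : ℝ => s * (2 - s) * (2 * (x - 1)))
        (s * (2 - s) * 2) x := by
      have h0 : HasDerivAt (fun x : ℝ => 2 * (x - 1)) (2 : ℝ) x := by
        simpa using ((hasDerivAt_id x).sub_const 1).const_mul (2 : ℝ)
      simpa [mul_assoc] using h0.const_mul (s * (2 - s))
    have : HasDerivAt f1 _ x := (h1.add h2).sub h3
    convert this using 1
    have e1 : x ^ (s - 1) * x ^ (1 - s) = 1 := by
      rw [← Real.rpow_add hx]; norm_num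
    have e2 : x ^ (s - 2) * x ^ (2 - s) = 1 := by
      rw [← Real.rpow_add hx]; norm_num
    have e3 : x ^ (-s) * x ^ s = 1 := by
      rw [← Real.rpow_add hx]; norm_num
    nlinarith [e1, e2, e3]
  have hmono1 : MonotoneOn f1 (Set.Ici (1 : ℝ)) := by
    apply monotoneOn_of_deriv_nonneg (convex_Ici 1)
    · exact fun x hx => (hd1 x (lt_of_lt_of_le one_pos hx)).continuousAt.continuousWithinAt
    · intro x hx
      rw [interior_Ici] at hx
      exact (hd1 x (lt_trans one_pos hx)).differentiableAt.differentiableWithinAt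
    · intro x hx
      rw [interior_Ici] at hx
      rw [(hd1 x (lt_trans one_pos hx)).deriv]
      exact f2_nonneg hs0 hs2 (lt_trans one_pos hx)
  have hf1_one : f1 1 = 0 := by simp [hf1]
  have hf1_nonneg : ∀ x : ℝ, 1 ≤ x → 0 ≤ f1 x := by
    intro x hx
    have := hmono1 (self_mem_Ici) (mem_Ici.2 hx) hx
    rwa [hf1_one] at this
  have hmono : MonotoneOn f (Set.Ici (1 : ℝ)) := by
    apply monotoneOn_of_deriv_nonneg (convex_Ici 1)
    · exact fun x hx => (hd x (lt_of_lt_of_le one_pos hx)).continuousAt.continuousWithinAt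
    · intro x hx
      rw [interior_Ici] at hx
      exact (hd x (lt_trans one_pos hx)).differentiableAt.differentiableWithinAt
    · intro x hx
      rw [interior_Ici] at hx
      rw [(hd x (lt_trans one_pos hx)).deriv]
      exact hf1_nonneg x hx.le
  have hf_one : f 1 = 0 := by simp [hf]
  have := hmono (self_mem_Ici) (mem_Ici.2 ht) ht
  rw [hf_one] at this
  simp only [hf] at this
  linarith

lemma rpow_two_split {x : ℝ} (hx : 0 ≤ x) (s : ℝ) : x ^ s * x ^ (2 - s) = x ^ (2 : ℕ) := by
  rw [← Real.rpow_add' hx (by norm_num : s + (2 - s) ≠ 0),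
    show s + (2 - s) = ((2 : ℕ) : ℝ) by push_cast; ring, Real.rpow_natCast]

/-- Core case: both arguments nonnegative. -/
lemma lemC {s : ℝ} (hs0 : 0 < s) (hs2 : s < 2) {x y : ℝ} (hy : 0 ≤ y) (hxy : y ≤ x) :
    s * (2 - s) * (x - y) ^ 2 ≤ (x ^ s - y ^ s) * (x ^ (2 - s) - y ^ (2 - s)) := by
  rcases hy.lt_or_eq with hy0 | rfl
  · have hx0 : 0 < x := lt_of_lt_of_le hy0 hxy
    have ht : 1 ≤ x / y := (one_le_div hy0).2 hxy
    have hG := lemG hs0 hs2 ht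
    have e1 : (x / y) ^ s = x ^ s / y ^ s := Real.div_rpow hx0.le hy0.le s
    have e2 : (x / y) ^ (2 - s) = x ^ (2 - s) / y ^ (2 - s) := Real.div_rpow hx0.le hy0.le _
    have ey : y ^ s * y ^ (2 - s) = y ^ (2 : ℕ) := rpow_two_split hy0.le s
    have hys : (0 : ℝ) < y ^ s := Real.rpow_pos_of_pos hy0 _
    have hys2 : (0 : ℝ) < y ^ (2 - s) := Real.rpow_pos_of_pos hy0 _
    have key : ((x / y) ^ s - 1) * ((x / y) ^ (2 - s) - 1) * (y ^ s * y ^ (2 - s))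
        = (x ^ s - y ^ s) * (x ^ (2 - s) - y ^ (2 - s)) := by
      rw [e1, e2]; field_simp
    have keyl : s * (2 - s) * (x - y) ^ 2
        = s * (2 - s) * (x / y - 1) ^ 2 * (y ^ s * y ^ (2 - s)) := by
      rw [ey]; field_simp
    rw [keyl, ← key]
    have hyy : (0 : ℝ) ≤ y ^ s * y ^ (2 - s) := by positivity
    exact mul_le_mul_of_nonneg_right hG hyy
  · rw [Real.zero_rpow hs0.ne', Real.zero_rpow (by linarith : (2 : ℝ) - s ≠ 0)]
    have hx : 0 ≤ x := hxy
    have ex : x ^ s * x ^ (2 - s) = x ^ (2 : ℕ) := rpow_two_split hx s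
    nlinarith [sq_nonneg (s - 1), sq_nonneg x, ex]

/-- Mixed-sign case. -/
lemma lemM {s x y : ℝ} (hs0 : 0 < s) (hs2 : s < 2) (hx : 0 ≤ x) (hy : 0 ≤ y) :
    s * (2 - s) * (x + y) ^ 2 ≤ (x ^ s + y ^ s) * (x ^ (2 - s) + y ^ (2 - s)) := by
  have ex : x ^ s * x ^ (2 - s) = x ^ (2 : ℕ) := rpow_two_split hx s
  have ey : y ^ s * y ^ (2 - s) = y ^ (2 : ℕ) := rpow_two_split hy s
  have hu : (0 : ℝ) ≤ x ^ s * y ^ (2 - s) := by positivity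
  have hv : (0 : ℝ) ≤ x ^ (2 - s) * y ^ s := by positivity
  have huv : (x ^ s * y ^ (2 - s)) * (x ^ (2 - s) * y ^ s) = (x * y) ^ (2 : ℕ) := by
    have : (x ^ s * y ^ (2 - s)) * (x ^ (2 - s) * y ^ s)
        = (x ^ s * x ^ (2 - s)) * (y ^ s * y ^ (2 - s)) := by ring
    rw [this, ex, ey]; ring
  have hcross : 2 * (x * y) ≤ x ^ s * y ^ (2 - s) + x ^ (2 - s) * y ^ s := by
    have hs1 : Real.sqrt (x ^ s * y ^ (2 - s)) * Real.sqrt (x ^ (2 - s) * y ^ s) = x * y := by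
      rw [← Real.sqrt_mul hu, huv]
      exact Real.sqrt_sq (mul_nonneg hx hy)
    calc 2 * (x * y) = 2 * Real.sqrt (x ^ s * y ^ (2 - s)) * Real.sqrt (x ^ (2 - s) * y ^ s) := by
          rw [mul_assoc, hs1]
      _ ≤ Real.sqrt (x ^ s * y ^ (2 - s)) ^ 2 + Real.sqrt (x ^ (2 - s) * y ^ s) ^ 2 :=
          two_mul_le_add_sq _ _
      _ = x ^ s * y ^ (2 - s) + x ^ (2 - s) * y ^ s := by
          rw [Real.sq_sqrt hu, Real.sq_sqrt hv]
  nlinarith [sq_nonneg (s - 1), sq_nonneg (x + y), ex, ey, hcross, mul_nonneg hx hy]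

/-- The main pointwise inequality in normalized form. -/
lemma lemL {s : ℝ} (hs0 : 0 < s) (hs2 : s < 2) (A B : ℝ) :
    s * (2 - s) * (A - B) ^ 2 ≤ (phi s A - phi s B) * (phi (2 - s) A - phi (2 - s) B) := by
  have hs2' : (2 : ℝ) - s ≠ 0 := by linarith
  wlog hAB : B ≤ A with H
  · have h := H hs0 hs2 B A hs2' (le_of_not_ge hAB)
    have h1 : (phi s A - phi s B) * (phi (2 - s) A - phi (2 - s) B)
        = (phi s B - phi s A) * (phi (2 - s) B - phi (2 - s) A) := by ring
    have h2 : s * (2 - s) * (A - B) ^ 2 = s * (2 - s) * (B - A) ^ 2 := by ring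
    rw [h1, h2]; exact h
  rcases le_total 0 B with hB | hB
  · rw [phi_of_nonneg hs0.ne' (hB.trans hAB), phi_of_nonneg hs0.ne' hB,
      phi_of_nonneg hs2' (hB.trans hAB), phi_of_nonneg hs2' hB]
    exact lemC hs0 hs2 hB hAB
  rcases le_total A 0 with hA | hA
  · have eA : phi s A = -(-A) ^ s := by
      have h := phi_neg s (-A); rw [neg_neg] at h
      rw [show phi s A = -phi s (-A) by linarith, phi_of_nonneg hs0.ne' (by linarith : (0:ℝ) ≤ -A)]
    have eB : phi s B = -(-B) ^ s := by
      have h := phi_neg s (-B); rw [neg_neg] at h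
      rw [show phi s B = -phi s (-B) by linarith, phi_of_nonneg hs0.ne' (by linarith : (0:ℝ) ≤ -B)]
    have eA2 : phi (2 - s) A = -(-A) ^ (2 - s) := by
      have h := phi_neg (2 - s) (-A); rw [neg_neg] at h
      rw [show phi (2-s) A = -phi (2-s) (-A) by linarith,
        phi_of_nonneg hs2' (by linarith : (0:ℝ) ≤ -A)]
    have eB2 : phi (2 - s) B = -(-B) ^ (2 - s) := by
      have h := phi_neg (2 - s) (-B); rw [neg_neg] at h
      rw [show phi (2-s) B = -phi (2-s) (-B) by linarith,
        phi_of_nonneg hs2' (by linarith : (0:ℝ) ≤ -B)]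
    have key := lemC hs0 hs2 (by linarith : (0:ℝ) ≤ -A) (by linarith : -A ≤ -B)
    calc s * (2 - s) * (A - B) ^ 2 = s * (2 - s) * (-B - -A) ^ 2 := by ring
      _ ≤ ((-B) ^ s - (-A) ^ s) * ((-B) ^ (2 - s) - (-A) ^ (2 - s)) := key
      _ = (phi s A - phi s B) * (phi (2 - s) A - phi (2 - s) B) := by
          rw [eA, eB, eA2, eB2]; ring
  · have eB : phi s B = -(-B) ^ s := by
      have h := phi_neg s (-B); rw [neg_neg] at h
      rw [show phi s B = -phi s (-B) by linarith, phi_of_nonneg hs0.ne' (by linarith : (0:ℝ) ≤ -B)]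
    have eB2 : phi (2 - s) B = -(-B) ^ (2 - s) := by
      have h := phi_neg (2 - s) (-B); rw [neg_neg] at h
      rw [show phi (2-s) B = -phi (2-s) (-B) by linarith,
        phi_of_nonneg hs2' (by linarith : (0:ℝ) ≤ -B)]
    have key := lemM hs0 hs2 hA (by linarith : (0:ℝ) ≤ -B)
    calc s * (2 - s) * (A - B) ^ 2 = s * (2 - s) * (A + -B) ^ 2 := by ring
      _ ≤ (A ^ s + (-B) ^ s) * (A ^ (2 - s) + (-B) ^ (2 - s)) := key
      _ = (phi s A - phi s B) * (phi (2 - s) A - phi (2 - s) B) := by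
          rw [phi_of_nonneg hs0.ne' hA, phi_of_nonneg hs2' hA, eB, eB2]; ring

theorem stmt_8 (p : ℝ) (hp : 1 < p) (a b : ℝ) :
    (4 * (p - 1) / p ^ 2) * (phi (p / 2) a - phi (p / 2) b) ^ (2 : ℕ) ≤
      (phi (p - 1) a - phi (p - 1) b) * (a - b) := by
  have hp0 : 0 < p := by linarith
  have hs0 : 0 < 2 / p := by positivity
  have hs2 : 2 / p < 2 := by rw [div_lt_iff₀ hp0]; nlinarith
  have key := lemL hs0 hs2 (phi (p / 2) a) (phi (p / 2) b)
  have e1 : phi (2 / p) (phi (p / 2) a) = a := by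
    rw [phi_comp, show p / 2 * (2 / p) = 1 by field_simp, phi_one']
  have e2 : phi (2 / p) (phi (p / 2) b) = b := by
    rw [phi_comp, show p / 2 * (2 / p) = 1 by field_simp, phi_one']
  have e3 : phi (2 - 2 / p) (phi (p / 2) a) = phi (p - 1) a := by
    rw [phi_comp, show p / 2 * (2 - 2 / p) = p - 1 by field_simp]
  have e4 : phi (2 - 2 / p) (phi (p / 2) b) = phi (p - 1) b := by
    rw [phi_comp, show p / 2 * (2 - 2 / p) = p - 1 by field_simp]
  rw [e1, e2, e3, e4] at key
  have ec : 2 / p * (2 - 2 / p) = 4 * (p - 1) / p ^ 2 := by field_simp; ring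
  rw [ec] at key
  rw [mul_comm (phi (p - 1) a - phi (p - 1) b)]
  exact key
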